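/- Let w : ZMod m → ℤ² be a closed squared spiral on m vertices that is a window (all turns have the same sign) and whose associated pair (S⁰, S¹) is an hv-convex switching. Then there exists a point x ∈ ℝ², not lying on any horizontal or vertical line through a vertex of the spiral, such that each of the four closed quadrants Z_i(x) ⊆ ℝ², i = 0,1,2,3, contains exactly m/4 vertices of the spiral. -/

import Mathlib

/-- The four quadrant regions `Z_i(v)` in `ℤ²`. -/
def Zq (i : Fin 4) (v : ℤ × ℤ) : Set (ℤ × ℤ) :=
  match i with
  | 0 => {p | p.1 ≤ v.1 ∧ p.2 ≤ v.2}
  | 1 => {p | v.1 ≤ p.1 ∧ p.2 ≤ v.2}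
  | 2 => {p | v.1 ≤ p.1 ∧ v.2 ≤ p.2}
  | 3 => {p | p.1 ≤ v.1 ∧ v.2 ≤ p.2}

/-- Horizontal projection: the number of points of `S` on the horizontal line `y = c`. -/
noncomputable def hProj (S : Set (ℤ × ℤ)) (c : ℤ) : ℕ := {p ∈ S | p.2 = c}.ncard

/-- Vertical projection: the number of points of `S` on the vertical line `x = c`. -/
noncomputable def vProj (S : Set (ℤ × ℤ)) (c : ℤ) : ℕ := {p ∈ S | p.1 = c}.ncard

/-- An hv-switching: a pair of disjoint finite sets of equal cardinality having the same
horizontal and vertical projections. -/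
def IsHvSwitching (S0 S1 : Set (ℤ × ℤ)) : Prop :=
  S0.Finite ∧ S1.Finite ∧ Disjoint S0 S1 ∧ S0.ncard = S1.ncard ∧
    (∀ c : ℤ, hProj S0 c = hProj S1 c) ∧ (∀ c : ℤ, vProj S0 c = vProj S1 c)

/-- An hv-convex switching: an hv-switching in which every point has a free region,
i.e. a quadrant containing no point of the other component. -/
def IsHvConvexSwitching (S0 S1 : Set (ℤ × ℤ)) : Prop :=
  IsHvSwitching S0 S1 ∧ (∀ x ∈ S0, ∃ i : Fin 4, Zq i x ∩ S1 = ∅) ∧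
    (∀ x ∈ S1, ∃ i : Fin 4, Zq i x ∩ S0 = ∅)

/-- A closed squared spiral on `m` vertices: an injective closed lattice path whose
segments are alternately horizontal (from even-indexed vertices) and vertical
(from odd-indexed vertices). -/
structure IsClosedSquaredSpiral {m : ℕ} (w : ZMod m → ℤ × ℤ) : Prop where
  even_m : Even m
  four_le : 4 ≤ m
  inj : Function.Injective w
  horiz : ∀ i : ZMod m, Even i.val → (w (i + 1)).2 = (w i).2 ∧ (w (i + 1)).1 ≠ (w i).1
  vert : ∀ i : ZMod m, ¬ Even i.val → (w (i + 1)).1 = (w i).1 ∧ (w (i + 1)).2 ≠ (w i).2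

/-- The turn `d(i) = u₁v₂ − u₂v₁` at vertex `i`, where `u = w i − w (i−1)` and
`v = w (i+1) − w i`. -/
def turn {m : ℕ} (w : ZMod m → ℤ × ℤ) (i : ZMod m) : ℤ :=
  ((w i).1 - (w (i - 1)).1) * ((w (i + 1)).2 - (w i).2)
    - ((w i).2 - (w (i - 1)).2) * ((w (i + 1)).1 - (w i).1)

/-- A window: a squared spiral all of whose turns have the same sign. -/
def IsWindow {m : ℕ} (w : ZMod m → ℤ × ℤ) : Prop :=
  (∀ i : ZMod m, 0 < turn w i) ∨ (∀ i : ZMod m, turn w i < 0)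

/-- The even-indexed vertices of a spiral. -/
def spiralEven {m : ℕ} (w : ZMod m → ℤ × ℤ) : Set (ℤ × ℤ) := w '' {i | Even i.val}

/-- The odd-indexed vertices of a spiral. -/
def spiralOdd {m : ℕ} (w : ZMod m → ℤ × ℤ) : Set (ℤ × ℤ) := w '' {i | ¬ Even i.val}

/-- The four quadrant regions `Z_i(x)` in `ℝ²`. -/
def ZqR (i : Fin 4) (x : ℝ × ℝ) : Set (ℝ × ℝ) :=
  match i with
  | 0 => {p | p.1 ≤ x.1 ∧ p.2 ≤ x.2}
  | 1 => {p | x.1 ≤ p.1 ∧ p.2 ≤ x.2}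
  | 2 => {p | x.1 ≤ p.1 ∧ x.2 ≤ p.2}
  | 3 => {p | p.1 ≤ x.1 ∧ x.2 ≤ p.2}

/-- The embedding of `ℤ²` into `ℝ²`. -/
def toR (p : ℤ × ℤ) : ℝ × ℝ := ((p.1 : ℝ), (p.2 : ℝ))

set_option linter.unusedSectionVars false

namespace Stmt9

variable {m : ℕ} (w : ZMod m → ℤ × ℤ)

/-- signed x-offset from `w i` to its horizontal neighbour -/
def A (i : ZMod m) : ℤ :=
  if Even i.val then (w (i+1)).1 - (w i).1 else (w (i-1)).1 - (w i).1
/-- signed y-offset from `w i` to its vertical neighbour -/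
def B (i : ZMod m) : ℤ :=
  if Even i.val then (w (i-1)).2 - (w i).2 else (w (i+1)).2 - (w i).2
/-- index of horizontal neighbour -/
def hn (i : ZMod m) : ZMod m := if Even i.val then i+1 else i-1
/-- index of vertical neighbour -/
def vn (i : ZMod m) : ZMod m := if Even i.val then i-1 else i+1

def C00 : Set (ZMod m) := {i | 0 < A w i ∧ 0 < B w i}
def C10 : Set (ZMod m) := {i | A w i < 0 ∧ 0 < B w i}
def C11 : Set (ZMod m) := {i | A w i < 0 ∧ B w i < 0}
def C01 : Set (ZMod m) := {i | 0 < A w i ∧ B w i < 0}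

section
variable (hw : IsClosedSquaredSpiral w)
include hw

lemma nz : NeZero m := ⟨by have := hw.four_le; omega⟩

lemma pflip (i : ZMod m) : Even (i+1).val ↔ ¬ Even i.val := by
  have := nz w hw
  have hm : 2 ∣ m := hw.even_m.two_dvd
  have h1 : (i+1).val = (i.val + (1 : ZMod m).val) % m := ZMod.val_add i 1
  have h2 : (1 : ZMod m).val = 1 :=
    (ZMod.val_one_eq_one_mod m) ▸ Nat.mod_eq_of_lt (by have := hw.four_le; omega)
  rw [h1, h2, Nat.even_iff, Nat.even_iff, Nat.mod_mod_of_dvd _ hm]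
  omega

lemma pflip' (i : ZMod m) : Even (i-1).val ↔ ¬ Even i.val := by
  have h := pflip w hw (i-1)
  rw [sub_add_cancel] at h
  tauto

lemma hA (i : ZMod m) : A w i ≠ 0 := by
  unfold A
  split
  · exact sub_ne_zero.mpr (hw.horiz i (by assumption)).2
  · have h := (hw.horiz (i-1) ((pflip' w hw i).mpr (by assumption))).2
    rw [sub_add_cancel] at h
    exact sub_ne_zero.mpr (Ne.symm h)

lemma hB (i : ZMod m) : B w i ≠ 0 := by
  unfold B
  split
  · have h := (hw.vert (i-1) (by rw [pflip' w hw i]; simpa using (by assumption))).2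
    rw [sub_add_cancel] at h
    exact sub_ne_zero.mpr (Ne.symm h)
  · exact sub_ne_zero.mpr (hw.vert i (by assumption)).2

lemma hn_fst (i : ZMod m) : (w (hn i)).1 = (w i).1 + A w i := by
  unfold hn A; split <;> ring

lemma hn_snd (i : ZMod m) : (w (hn i)).2 = (w i).2 := by
  unfold hn
  split
  · exact (hw.horiz i (by assumption)).1
  · have h := (hw.horiz (i-1) ((pflip' w hw i).mpr (by assumption))).1
    rw [sub_add_cancel] at h
    exact h.symm

lemma vn_snd (i : ZMod m) : (w (vn i)).2 = (w i).2 + B w i := by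
  unfold vn B; split <;> ring

lemma vn_fst (i : ZMod m) : (w (vn i)).1 = (w i).1 := by
  unfold vn
  split
  · have h := (hw.vert (i-1) (by rw [pflip' w hw i]; simpa using (by assumption))).1
    rw [sub_add_cancel] at h
    exact h.symm
  · exact (hw.vert i (by assumption)).1

lemma hn_parity (i : ZMod m) : Even (hn i).val ↔ ¬ Even i.val := by
  unfold hn
  split
  · exact pflip w hw i
  · exact pflip' w hw i

lemma vn_parity (i : ZMod m) : Even (vn i).val ↔ ¬ Even i.val := by
  unfold vn
  split
  · exact pflip' w hw i
  · exact pflip w hw i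

lemma hn_invol (i : ZMod m) : hn (hn i) = i := by
  unfold hn
  rcases em (Even i.val) with h | h
  · rw [if_pos h]
    rw [if_neg (by rw [pflip w hw i]; exact (not_not.mpr h)), add_sub_cancel_right]
  · rw [if_neg h]
    rw [if_pos ((pflip' w hw i).mpr h), sub_add_cancel]

lemma vn_invol (i : ZMod m) : vn (vn i) = i := by
  unfold vn
  rcases em (Even i.val) with h | h
  · rw [if_pos h]
    rw [if_neg (by rw [pflip' w hw i]; exact (not_not.mpr h)), sub_add_cancel]
  · rw [if_neg h]
    rw [if_pos ((pflip w hw i).mpr h), add_sub_cancel_right]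

lemma A_hn (i : ZMod m) : A w (hn i) = - A w i := by
  have h1 := hn_fst w hw (hn i)
  rw [hn_invol w hw i] at h1
  have h2 := hn_fst w hw i
  omega

lemma B_vn (i : ZMod m) : B w (vn i) = - B w i := by
  have h1 := vn_snd w hw (vn i)
  rw [vn_invol w hw i] at h1
  have h2 := vn_snd w hw i
  omega

lemma turn_eq (i : ZMod m) :
    turn w i = if Even i.val then A w i * B w i else -(A w i * B w i) := by
  unfold turn A B
  rcases em (Even i.val) with h | h
  · rw [if_pos h, if_pos h, if_pos h]
    have h1 : (w i).1 = (w (i-1)).1 := by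
      have := (hw.vert (i-1) (by rw [pflip' w hw i]; exact not_not.mpr h)).1
      rwa [sub_add_cancel] at this
    rw [h1]; ring
  · rw [if_neg h, if_neg h, if_neg h]
    have h1 : (w i).2 = (w (i-1)).2 := by
      have := (hw.horiz (i-1) ((pflip' w hw i).mpr h)).1
      rwa [sub_add_cancel] at this
    rw [h1]; ring

end

section
variable (hw : IsClosedSquaredSpiral w) (hwin : IsWindow w)
include hw hwin

lemma hprod (i j : ZMod m) : 0 < turn w i * turn w j := by
  rcases hwin with h | h
  · exact mul_pos (h i) (h j)
  · exact mul_pos_of_neg_of_neg (h i) (h j)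

lemma B_hn_sign (i : ZMod m) : 0 < B w (hn i) * B w i := by
  have hp := hprod w hw hwin i (hn i)
  have t1 := turn_eq w hw i
  have t2 := turn_eq w hw (hn i)
  have hAn := A_hn w hw i
  have hpar := hn_parity w hw i
  have ha := hA w hw i
  have key : turn w i * turn w (hn i) = (A w i * A w i) * (B w i * B w (hn i)) := by
    rcases em (Even i.val) with h | h
    · rw [t1, t2, if_pos h, if_neg (by rw [hpar]; exact not_not.mpr h), hAn]; ring
    · rw [t1, t2, if_neg h, if_pos (hpar.mpr h), hAn]; ring
  rw [key] at hp
  have haa : 0 < A w i * A w i := mul_self_pos.mpr ha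
  nlinarith

lemma A_vn_sign (i : ZMod m) : 0 < A w (vn i) * A w i := by
  have hp := hprod w hw hwin i (vn i)
  have t1 := turn_eq w hw i
  have t2 := turn_eq w hw (vn i)
  have hBn := B_vn w hw i
  have hpar := vn_parity w hw i
  have hb := hB w hw i
  have key : turn w i * turn w (vn i) = (B w i * B w i) * (A w i * A w (vn i)) := by
    rcases em (Even i.val) with h | h
    · rw [t1, t2, if_pos h, if_neg (by rw [hpar]; exact not_not.mpr h), hBn]; ring
    · rw [t1, t2, if_neg h, if_pos (hpar.mpr h), hBn]; ring
  rw [key] at hp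
  have hbb : 0 < B w i * B w i := mul_self_pos.mpr hb
  nlinarith

lemma hn_C00 (i : ZMod m) : i ∈ C00 w ↔ hn i ∈ C10 w := by
  have h1 := A_hn w hw i
  have h2 := B_hn_sign w hw hwin i
  constructor
  · rintro ⟨ha, hb⟩; exact ⟨by omega, by nlinarith⟩
  · rintro ⟨ha, hb⟩; exact ⟨by omega, by nlinarith⟩

lemma hn_C01 (i : ZMod m) : i ∈ C01 w ↔ hn i ∈ C11 w := by
  have h1 := A_hn w hw i
  have h2 := B_hn_sign w hw hwin i
  constructor
  · rintro ⟨ha, hb⟩; exact ⟨by omega, by nlinarith⟩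
  · rintro ⟨ha, hb⟩; exact ⟨by omega, by nlinarith⟩

lemma vn_C00 (i : ZMod m) : i ∈ C00 w ↔ vn i ∈ C01 w := by
  have h1 := B_vn w hw i
  have h2 := A_vn_sign w hw hwin i
  constructor
  · rintro ⟨ha, hb⟩; exact ⟨by nlinarith, by omega⟩
  · rintro ⟨ha, hb⟩; exact ⟨by nlinarith, by omega⟩

lemma vn_C10 (i : ZMod m) : i ∈ C10 w ↔ vn i ∈ C11 w := by
  have h1 := B_vn w hw i
  have h2 := A_vn_sign w hw hwin i
  constructor
  · rintro ⟨ha, hb⟩; exact ⟨by nlinarith, by omega⟩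
  · rintro ⟨ha, hb⟩; exact ⟨by nlinarith, by omega⟩


lemma n00_10 : (C00 w).ncard = (C10 w).ncard := by
  have hinj : Function.Injective (hn : ZMod m → ZMod m) :=
    Function.Involutive.injective (hn_invol w hw)
  have himg : hn '' C00 w = C10 w := by
    ext j
    constructor
    · rintro ⟨i, hi, rfl⟩; exact (hn_C00 w hw hwin i).mp hi
    · intro hj
      exact ⟨hn j, (hn_C00 w hw hwin (hn j)).mpr (by rwa [hn_invol w hw]), hn_invol w hw j⟩
  rw [← himg, Set.ncard_image_of_injective _ hinj]

lemma n01_11 : (C01 w).ncard = (C11 w).ncard := by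
  have hinj : Function.Injective (hn : ZMod m → ZMod m) :=
    Function.Involutive.injective (hn_invol w hw)
  have himg : hn '' C01 w = C11 w := by
    ext j
    constructor
    · rintro ⟨i, hi, rfl⟩; exact (hn_C01 w hw hwin i).mp hi
    · intro hj
      exact ⟨hn j, (hn_C01 w hw hwin (hn j)).mpr (by rwa [hn_invol w hw]), hn_invol w hw j⟩
  rw [← himg, Set.ncard_image_of_injective _ hinj]

lemma n00_01 : (C00 w).ncard = (C01 w).ncard := by
  have hinj : Function.Injective (vn : ZMod m → ZMod m) :=
    Function.Involutive.injective (vn_invol w hw)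
  have himg : vn '' C00 w = C01 w := by
    ext j
    constructor
    · rintro ⟨i, hi, rfl⟩; exact (vn_C00 w hw hwin i).mp hi
    · intro hj
      exact ⟨vn j, (vn_C00 w hw hwin (vn j)).mpr (by rwa [vn_invol w hw]), vn_invol w hw j⟩
  rw [← himg, Set.ncard_image_of_injective _ hinj]

lemma total : 4 * (C00 w).ncard = m := by
  haveI := nz w hw
  have hU : C00 w ∪ C10 w ∪ C11 w ∪ C01 w = Set.univ := by
    ext i
    simp only [C00, C10, C11, C01, Set.mem_union, Set.mem_setOf_eq, Set.mem_univ, iff_true]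
    have := hA w hw i
    have := hB w hw i
    omega
  have d1 : Disjoint (C00 w) (C10 w) := by
    rw [Set.disjoint_left]; rintro i ⟨h1, _⟩ ⟨h2, _⟩; omega
  have d2 : Disjoint (C00 w ∪ C10 w) (C11 w) := by
    rw [Set.disjoint_left]
    rintro i (⟨_, h1⟩ | ⟨_, h1⟩) ⟨_, h2⟩ <;> omega
  have d3 : Disjoint (C00 w ∪ C10 w ∪ C11 w) (C01 w) := by
    rw [Set.disjoint_left]
    rintro i ((⟨h1, _⟩ | ⟨h1, _⟩) | ⟨h1, _⟩) ⟨h2, h3⟩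
    · simp only [C00, Set.mem_setOf_eq] at *; omega
    · omega
    · omega
  have hcard : (C00 w ∪ C10 w ∪ C11 w ∪ C01 w).ncard = m := by
    rw [hU, Set.ncard_univ, Nat.card_eq_fintype_card, ZMod.card]
  rw [Set.ncard_union_eq d3 (Set.toFinite _) (Set.toFinite _),
    Set.ncard_union_eq d2 (Set.toFinite _) (Set.toFinite _),
    Set.ncard_union_eq d1 (Set.toFinite _) (Set.toFinite _)] at hcard
  have e1 := n00_10 w hw hwin
  have e2 := n01_11 w hw hwin
  have e3 := n00_01 w hw hwin
  omega

lemma hpar {i j : ZMod m} (hi : i ∈ C00 w ∪ C11 w) (hj : j ∈ C10 w ∪ C01 w) :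
    Even i.val ↔ ¬ Even j.val := by
  have ti := turn_eq w hw i
  have tj := turn_eq w hw j
  have hiAB : 0 < A w i * B w i := by
    rcases hi with ⟨h1, h2⟩ | ⟨h1, h2⟩
    · exact mul_pos h1 h2
    · exact mul_pos_of_neg_of_neg h1 h2
  have hjAB : A w j * B w j < 0 := by
    rcases hj with ⟨h1, h2⟩ | ⟨h1, h2⟩
    · exact mul_neg_of_neg_of_pos h1 h2
    · exact mul_neg_of_pos_of_neg h1 h2
  rcases hwin with hword | hword
  · have h1 : Even i.val := by
      by_contra h
      rw [if_neg h] at ti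
      have := hword i
      omega
    have h2 : ¬ Even j.val := by
      intro h
      rw [if_pos h] at tj
      have := hword j
      omega
    tauto
  · have h1 : ¬ Even i.val := by
      intro h
      rw [if_pos h] at ti
      have := hword i
      omega
    have h2 : Even j.val := by
      by_contra h
      rw [if_neg h] at tj
      have := hword j
      omega
    tauto

end

section
variable (hw : IsClosedSquaredSpiral w) (hwin : IsWindow w)
  (hconv : IsHvConvexSwitching (spiralEven w) (spiralOdd w))
include hw hconv

lemma freeQ (i : ZMod m) :
    ∃ j : Fin 4, ∀ k : ZMod m, (Even k.val ↔ ¬ Even i.val) → w k ∉ Zq j (w i) := by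
  rcases em (Even i.val) with h | h
  · obtain ⟨j, hj⟩ := hconv.2.1 (w i) ⟨i, h, rfl⟩
    refine ⟨j, fun k hk hmem => ?_⟩
    exact Set.eq_empty_iff_forall_notMem.mp hj (w k) ⟨hmem, ⟨k, fun he => hk.mp he h, rfl⟩⟩
  · obtain ⟨j, hj⟩ := hconv.2.2 (w i) ⟨i, h, rfl⟩
    refine ⟨j, fun k hk hmem => ?_⟩
    exact Set.eq_empty_iff_forall_notMem.mp hj (w k) ⟨hmem, ⟨k, hk.mpr h, rfl⟩⟩

lemma F00 {i : ZMod m} (hi : i ∈ C00 w) :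
    ∀ k : ZMod m, (Even k.val ↔ ¬ Even i.val) → w k ∉ Zq 0 (w i) := by
  obtain ⟨j, hj⟩ := freeQ w hw hconv i
  have hhn := hj (hn i) (hn_parity w hw i)
  have hvn := hj (vn i) (vn_parity w hw i)
  have hf := hn_fst w hw i
  have hs := hn_snd w hw i
  have vf := vn_fst w hw i
  have vs := vn_snd w hw i
  obtain ⟨hia, hib⟩ := hi
  fin_cases j
  · exact hj
  · exact absurd (show w (hn i) ∈ Zq 1 (w i) from ⟨by omega, by omega⟩) hhn
  · exact absurd (show w (hn i) ∈ Zq 2 (w i) from ⟨by omega, by omega⟩) hhn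
  · exact absurd (show w (vn i) ∈ Zq 3 (w i) from ⟨by omega, by omega⟩) hvn

lemma F10 {i : ZMod m} (hi : i ∈ C10 w) :
    ∀ k : ZMod m, (Even k.val ↔ ¬ Even i.val) → w k ∉ Zq 1 (w i) := by
  obtain ⟨j, hj⟩ := freeQ w hw hconv i
  have hhn := hj (hn i) (hn_parity w hw i)
  have hvn := hj (vn i) (vn_parity w hw i)
  have hf := hn_fst w hw i
  have hs := hn_snd w hw i
  have vf := vn_fst w hw i
  have vs := vn_snd w hw i
  obtain ⟨hia, hib⟩ := hi
  fin_cases j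
  · exact absurd (show w (hn i) ∈ Zq 0 (w i) from ⟨by omega, by omega⟩) hhn
  · exact hj
  · exact absurd (show w (vn i) ∈ Zq 2 (w i) from ⟨by omega, by omega⟩) hvn
  · exact absurd (show w (hn i) ∈ Zq 3 (w i) from ⟨by omega, by omega⟩) hhn

lemma F11 {i : ZMod m} (hi : i ∈ C11 w) :
    ∀ k : ZMod m, (Even k.val ↔ ¬ Even i.val) → w k ∉ Zq 2 (w i) := by
  obtain ⟨j, hj⟩ := freeQ w hw hconv i
  have hhn := hj (hn i) (hn_parity w hw i)
  have hvn := hj (vn i) (vn_parity w hw i)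
  have hf := hn_fst w hw i
  have hs := hn_snd w hw i
  have vf := vn_fst w hw i
  have vs := vn_snd w hw i
  obtain ⟨hia, hib⟩ := hi
  fin_cases j
  · exact absurd (show w (hn i) ∈ Zq 0 (w i) from ⟨by omega, by omega⟩) hhn
  · exact absurd (show w (vn i) ∈ Zq 1 (w i) from ⟨by omega, by omega⟩) hvn
  · exact hj
  · exact absurd (show w (hn i) ∈ Zq 3 (w i) from ⟨by omega, by omega⟩) hhn

include hwin

lemma sepA {p q : ZMod m} (hp : p ∈ C00 w) (hq : q ∈ C10 w) : (w p).1 < (w q).1 := by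
  have hpq := hpar w hw hwin (Or.inl hp) (Or.inl hq)
  have h1 : w q ∉ Zq 0 (w p) := F00 w hw hconv hp q (by tauto)
  have h2 : w p ∉ Zq 1 (w q) := F10 w hw hconv hq p (by tauto)
  by_contra hc
  push_neg at hc
  rcases le_total (w q).2 (w p).2 with h | h
  · exact h1 ⟨hc, h⟩
  · exact h2 ⟨hc, h⟩

lemma sepB {q r : ZMod m} (hq : q ∈ C10 w) (hr : r ∈ C11 w) : (w q).2 < (w r).2 := by
  have hpq := hpar w hw hwin (Or.inr hr) (Or.inl hq)
  have h1 : w r ∉ Zq 1 (w q) := F10 w hw hconv hq r (by tauto)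
  have h2 : w q ∉ Zq 2 (w r) := F11 w hw hconv hr q (by tauto)
  by_contra hc
  push_neg at hc
  rcases le_total (w q).1 (w r).1 with h | h
  · exact h1 ⟨h, hc⟩
  · exact h2 ⟨h, hc⟩

end

end Stmt9

/-- if a window on `m` vertices is an hv-convex switching, then there is a
point `x ∈ ℝ²`, avoiding all horizontal and vertical lines through vertices, such that
every closed quadrant `Z_i(x)` contains exactly `m / 4` vertices of the spiral. -/
theorem stmt9 (m : ℕ) (w : ZMod m → ℤ × ℤ) (hw : IsClosedSquaredSpiral w)
    (hwin : IsWindow w)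
    (hconv : IsHvConvexSwitching (spiralEven w) (spiralOdd w)) :
    ∃ x : ℝ × ℝ, (∀ i : ZMod m, x.1 ≠ ((w i).1 : ℝ) ∧ x.2 ≠ ((w i).2 : ℝ)) ∧
      ∀ j : Fin 4, {i : ZMod m | toR (w i) ∈ ZqR j x}.ncard = m / 4 := by
  open Stmt9 in
  haveI := nz w hw
  have h4n : 4 * (C00 w).ncard = m := total w hw hwin
  have e1 := n00_10 w hw hwin
  have e2 := n01_11 w hw hwin
  have e3 := n00_01 w hw hwin
  have hm4 := hw.four_le
  have hne00 : (C00 w).Nonempty := Set.nonempty_of_ncard_ne_zero (by omega)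
  have hne10 : (C10 w).Nonempty := Set.nonempty_of_ncard_ne_zero (by omega)
  obtain ⟨p0, hp0, hmax0⟩ :=
    Set.Finite.exists_maximalFor (fun i => (w i).1) _ (Set.toFinite (C00 w)) hne00
  obtain ⟨q0, hq0, hmax1⟩ :=
    Set.Finite.exists_maximalFor (fun i => (w i).2) _ (Set.toFinite (C10 w)) hne10
  set M1 : ℤ := (w p0).1 with hM1def
  set M2 : ℤ := (w q0).2 with hM2def
  have hM1 : ∀ i ∈ C00 w, (w i).1 ≤ M1 := by
    intro i hi
    by_contra h
    push_neg at h
    have : (w i).1 ≤ (w p0).1 := hmax0 hi (le_of_lt h)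
    omega
  have hM2 : ∀ i ∈ C10 w, (w i).2 ≤ M2 := by
    intro i hi
    by_contra h
    push_neg at h
    have : (w i).2 ≤ (w q0).2 := hmax1 hi (le_of_lt h)
    omega
  -- the four bounds
  have hLx : ∀ i, 0 < A w i → (w i).1 ≤ M1 := by
    intro i hi
    rcases (hB w hw i).lt_or_gt with hb | hb
    · -- i ∈ C01 : its vertical neighbour is in C00 with the same first coordinate
      have hv : vn i ∈ C00 w := by
        refine (vn_C00 w hw hwin (vn i)).mpr ?_
        rw [vn_invol w hw]
        exact ⟨hi, hb⟩
      have := hM1 _ hv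
      have := vn_fst w hw i
      omega
    · exact hM1 i ⟨hi, hb⟩
  have hRx : ∀ i, A w i < 0 → M1 < (w i).1 := by
    intro i hi
    rcases (hB w hw i).lt_or_gt with hb | hb
    · -- i ∈ C11
      have hv : vn i ∈ C10 w := by
        refine (vn_C10 w hw hwin (vn i)).mpr ?_
        rw [vn_invol w hw]
        exact ⟨hi, hb⟩
      have := sepA w hw hwin hconv hp0 hv
      have := vn_fst w hw i
      omega
    · exact sepA w hw hwin hconv hp0 ⟨hi, hb⟩
  have hDy : ∀ i, 0 < B w i → (w i).2 ≤ M2 := by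
    intro i hi
    rcases (hA w hw i).lt_or_gt with ha | ha
    · exact hM2 i ⟨ha, hi⟩
    · have hv : hn i ∈ C10 w := (hn_C00 w hw hwin i).mp ⟨ha, hi⟩
      have := hM2 _ hv
      have := hn_snd w hw i
      omega
  have hUy : ∀ i, B w i < 0 → M2 < (w i).2 := by
    intro i hi
    rcases (hA w hw i).lt_or_gt with ha | ha
    · exact sepB w hw hwin hconv hq0 ⟨ha, hi⟩
    · have hv : hn i ∈ C11 w := (hn_C01 w hw hwin i).mp ⟨ha, hi⟩
      have := sepB w hw hwin hconv hq0 hv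
      have := hn_snd w hw i
      omega
  -- the separating point
  refine ⟨((M1 : ℝ) + 1/2, (M2 : ℝ) + 1/2), ?_, ?_⟩
  · intro i
    constructor
    · intro h
      have : (2 * M1 + 1 : ℝ) = 2 * (w i).1 := by
        simp only at h
        linarith
      have : (2 * M1 + 1 : ℤ) = 2 * (w i).1 := by exact_mod_cast this
      omega
    · intro h
      have : (2 * M2 + 1 : ℝ) = 2 * (w i).2 := by
        simp only at h
        linarith
      have : (2 * M2 + 1 : ℤ) = 2 * (w i).2 := by exact_mod_cast this
      omega
  · -- characterizations of the half-plane memberships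
    have cx : ∀ i : ZMod m, (((w i).1 : ℝ) ≤ (M1 : ℝ) + 1/2 ↔ 0 < A w i) := by
      intro i
      constructor
      · intro h
        rcases (hA w hw i).lt_or_gt with h' | h'
        · have h2 := hRx i h'
          have : ((M1 : ℝ) + 1 ≤ ((w i).1 : ℝ)) := by exact_mod_cast (by omega : M1 + 1 ≤ (w i).1)
          push_cast at this
          linarith
        · exact h'
      · intro h
        have : ((w i).1 : ℝ) ≤ (M1 : ℝ) := by exact_mod_cast hLx i h
        linarith
    have cx' : ∀ i : ZMod m, ((M1 : ℝ) + 1/2 ≤ ((w i).1 : ℝ) ↔ A w i < 0) := by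
      intro i
      constructor
      · intro h
        rcases (hA w hw i).lt_or_gt with h' | h'
        · exact h'
        · have : ((w i).1 : ℝ) ≤ (M1 : ℝ) := by exact_mod_cast hLx i h'
          linarith
      · intro h
        have : ((M1 : ℝ) + 1 ≤ ((w i).1 : ℝ)) := by exact_mod_cast (by have := hRx i h; omega : M1 + 1 ≤ (w i).1)
        linarith
    have cy : ∀ i : ZMod m, (((w i).2 : ℝ) ≤ (M2 : ℝ) + 1/2 ↔ 0 < B w i) := by
      intro i
      constructor
      · intro h
        rcases (hB w hw i).lt_or_gt with h' | h'
        · have : ((M2 : ℝ) + 1 ≤ ((w i).2 : ℝ)) := by exact_mod_cast (by have := hUy i h'; omega : M2 + 1 ≤ (w i).2)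
          linarith
        · exact h'
      · intro h
        have : ((w i).2 : ℝ) ≤ (M2 : ℝ) := by exact_mod_cast hDy i h
        linarith
    have cy' : ∀ i : ZMod m, ((M2 : ℝ) + 1/2 ≤ ((w i).2 : ℝ) ↔ B w i < 0) := by
      intro i
      constructor
      · intro h
        rcases (hB w hw i).lt_or_gt with h' | h'
        · exact h'
        · have : ((w i).2 : ℝ) ≤ (M2 : ℝ) := by exact_mod_cast hDy i h'
          linarith
      · intro h
        have : ((M2 : ℝ) + 1 ≤ ((w i).2 : ℝ)) := by exact_mod_cast (by have := hUy i h; omega : M2 + 1 ≤ (w i).2)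
        linarith
    have hS0 : {i : ZMod m | toR (w i) ∈ ZqR 0 (((M1 : ℝ) + 1/2, (M2 : ℝ) + 1/2))} = C00 w := by
      ext i
      show ((w i).1 : ℝ) ≤ (M1 : ℝ) + 1/2 ∧ ((w i).2 : ℝ) ≤ (M2 : ℝ) + 1/2 ↔ _
      rw [cx i, cy i]
      rfl
    have hS1 : {i : ZMod m | toR (w i) ∈ ZqR 1 (((M1 : ℝ) + 1/2, (M2 : ℝ) + 1/2))} = C10 w := by
      ext i
      show (M1 : ℝ) + 1/2 ≤ ((w i).1 : ℝ) ∧ ((w i).2 : ℝ) ≤ (M2 : ℝ) + 1/2 ↔ _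
      rw [cx' i, cy i]
      constructor
      · rintro ⟨h1, h2⟩; exact ⟨h1, h2⟩
      · rintro ⟨h1, h2⟩; exact ⟨h1, h2⟩
    have hS2 : {i : ZMod m | toR (w i) ∈ ZqR 2 (((M1 : ℝ) + 1/2, (M2 : ℝ) + 1/2))} = C11 w := by
      ext i
      show (M1 : ℝ) + 1/2 ≤ ((w i).1 : ℝ) ∧ (M2 : ℝ) + 1/2 ≤ ((w i).2 : ℝ) ↔ _
      rw [cx' i, cy' i]
      constructor
      · rintro ⟨h1, h2⟩; exact ⟨h1, h2⟩
      · rintro ⟨h1, h2⟩; exact ⟨h1, h2⟩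
    have hS3 : {i : ZMod m | toR (w i) ∈ ZqR 3 (((M1 : ℝ) + 1/2, (M2 : ℝ) + 1/2))} = C01 w := by
      ext i
      show ((w i).1 : ℝ) ≤ (M1 : ℝ) + 1/2 ∧ (M2 : ℝ) + 1/2 ≤ ((w i).2 : ℝ) ↔ _
      rw [cx i, cy' i]
      constructor
      · rintro ⟨h1, h2⟩; exact ⟨h1, h2⟩
      · rintro ⟨h1, h2⟩; exact ⟨h1, h2⟩
    intro j
    fin_cases j
    · show {i : ZMod m | toR (w i) ∈ ZqR 0 _}.ncard = m / 4
      rw [hS0]; omega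
    · show {i : ZMod m | toR (w i) ∈ ZqR 1 _}.ncard = m / 4
      rw [hS1]; omega
    · show {i : ZMod m | toR (w i) ∈ ZqR 2 _}.ncard = m / 4
      rw [hS2]; omega
    · show {i : ZMod m | toR (w i) ∈ ZqR 3 _}.ncard = m / 4
      rw [hS3]; omega
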